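/- arXiv:2502.06699 — 7 statements merged into one kernel-verified Lean document; each statement's English description precedes it below -/
import Mathlib

section
/- If a family F of subsets of [n], each of size at most k, satisfies |F| > r^k, then there exists a set X with 0 ≤ |X| < k such that the family F(X) = {F \ X : X ⊆ F, F ∈ F} is r-spread, i.e., for every set Y disjoint from X, |F(X ∪ Y)| ≤ r^{-|Y|}|F(X)|. -/
open Finset

/-- `restrict F X = F(X) = {F \ X : X ⊆ F, F ∈ F}`. -/
def restrict (F : Finset (Finset ℕ)) (X : Finset ℕ) : Finset (Finset ℕ) :=
  (F.filter fun A => X ⊆ A).image fun A => A \ X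

/-- A family `G` is `r`-spread if `|G(Z)| ≤ r^{-|Z|} |G|` for every set `Z`. -/
def IsSpread (r : ℝ) (G : Finset (Finset ℕ)) : Prop :=
  ∀ Z : Finset ℕ, ((restrict G Z).card : ℝ) ≤ (r ^ Z.card)⁻¹ * G.card

lemma restrict_empty (F : Finset (Finset ℕ)) : restrict F ∅ = F := by
  simp [_root_.restrict]

lemma mem_restrict {F : Finset (Finset ℕ)} {X B : Finset ℕ} :
    B ∈ restrict F X ↔ ∃ A ∈ F, X ⊆ A ∧ A \ X = B := by
  simp only [_root_.restrict, mem_image, mem_filter]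
  tauto

lemma restrict_restrict (F : Finset (Finset ℕ)) {X Z : Finset ℕ} (h : Disjoint Z X) :
    restrict (restrict F X) Z = restrict F (X ∪ Z) := by
  ext B
  simp only [mem_restrict]
  constructor
  · rintro ⟨C, ⟨A, hA, hXA, rfl⟩, hZC, rfl⟩
    refine ⟨A, hA, union_subset hXA (hZC.trans sdiff_subset), ?_⟩
    ext x
    simp only [mem_sdiff, mem_union]
    tauto
  · rintro ⟨A, hA, hYA, rfl⟩
    refine ⟨A \ X, ⟨A, hA, (subset_union_left).trans hYA, rfl⟩, ?_, ?_⟩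
    · rw [subset_sdiff]
      exact ⟨(subset_union_right).trans hYA, h⟩
    · ext x
      simp only [mem_sdiff, mem_union]
      tauto

theorem stmt0 (n k : ℕ) (r : ℝ) (hr : 1 < r) (F : Finset (Finset ℕ))
    (hF : ∀ A ∈ F, A ⊆ Finset.range n ∧ A.card ≤ k)
    (hlarge : r ^ k < (F.card : ℝ)) :
    ∃ X : Finset ℕ, X.card < k ∧ IsSpread r (restrict F X) := by
  have hr0 : (0:ℝ) < r := lt_trans one_pos hr
  have hFne : F.Nonempty := by
    rw [← Finset.card_pos]
    by_contra h
    push_neg at h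
    interval_cases h' : F.card <;> simp_all <;> nlinarith [pow_pos hr0 k, one_le_pow₀ hr.le (n := k)]
  classical
  set C : Finset (Finset ℕ) := F.biUnion Finset.powerset with hC
  have hCne : C.Nonempty := by
    obtain ⟨A, hA⟩ := hFne
    exact ⟨∅, Finset.mem_biUnion.2 ⟨A, hA, by simp⟩⟩
  have hempC : (∅ : Finset ℕ) ∈ C := by
    obtain ⟨A, hA⟩ := hFne
    exact Finset.mem_biUnion.2 ⟨A, hA, by simp⟩
  obtain ⟨X, hXC, hmax⟩ :=
    C.exists_max_image (fun X => r ^ X.card * ((restrict F X).card : ℝ)) hCne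
  obtain ⟨A₀, hA₀F, hXA₀⟩ := Finset.mem_biUnion.1 hXC
  rw [Finset.mem_powerset] at hXA₀
  have hXk : X.card ≤ k := (Finset.card_le_card hXA₀).trans (hF A₀ hA₀F).2
  have hfX : r ^ k < r ^ X.card * ((restrict F X).card : ℝ) := by
    have := hmax ∅ hempC
    simp only [restrict_empty, card_empty, pow_zero, one_mul] at this
    linarith
  have hXlt : X.card < k := by
    rcases lt_or_eq_of_le hXk with h | h
    · exact h
    · exfalso
      have hcard1 : (restrict F X).card ≤ 1 := by
        apply Finset.card_le_one.2
        intro a ha b hb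
        rw [mem_restrict] at ha hb
        obtain ⟨A, hA, hXA, rfl⟩ := ha
        obtain ⟨B, hB, hXB, rfl⟩ := hb
        have hAX : A = X := (Finset.eq_of_subset_of_card_le hXA (by rw [h]; exact (hF A hA).2)).symm
        have hBX : B = X := (Finset.eq_of_subset_of_card_le hXB (by rw [h]; exact (hF B hB).2)).symm
        rw [hAX, hBX]
      have : r ^ X.card * ((restrict F X).card : ℝ) ≤ r ^ k * 1 := by
        rw [h]
        exact mul_le_mul_of_nonneg_left (by exact_mod_cast hcard1) (le_of_lt (pow_pos hr0 k))
      linarith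
  refine ⟨X, hXlt, ?_⟩
  intro Z
  have hpos : (0:ℝ) < (r ^ Z.card)⁻¹ := by positivity
  have hRHS0 : (0:ℝ) ≤ (r ^ Z.card)⁻¹ * ((restrict F X).card : ℝ) := by positivity
  by_cases hdisj : Disjoint Z X
  · rw [restrict_restrict F hdisj]
    by_cases hne : (restrict F (X ∪ Z)).Nonempty
    · obtain ⟨B, hB⟩ := hne
      rw [mem_restrict] at hB
      obtain ⟨A, hA, hYA, rfl⟩ := hB
      have hYC : X ∪ Z ∈ C := Finset.mem_biUnion.2 ⟨A, hA, Finset.mem_powerset.2 hYA⟩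
      have hm := hmax (X ∪ Z) hYC
      have hcardU : (X ∪ Z).card = X.card + Z.card := by
        rw [Finset.card_union_of_disjoint hdisj.symm]
      rw [hcardU, pow_add] at hm
      have hpX : (0:ℝ) < r ^ X.card := pow_pos hr0 _
      have hpZ : (0:ℝ) < r ^ Z.card := pow_pos hr0 _
      rw [inv_mul_eq_div, le_div_iff₀ hpZ]
      nlinarith
    · rw [Finset.not_nonempty_iff_eq_empty] at hne
      rw [hne]
      simpa using hRHS0
  · have : restrict (restrict F X) Z = ∅ := by
      rw [Finset.eq_empty_iff_forall_notMem]
      intro B hB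
      rw [mem_restrict] at hB
      obtain ⟨D, hD, hZD, rfl⟩ := hB
      rw [mem_restrict] at hD
      obtain ⟨A, hA, hXA, rfl⟩ := hD
      exact hdisj (Finset.subset_sdiff.1 hZD).2
    rw [this]
    simpa using hRHS0
end

section
/- Let F be a family of 3-element subsets of [6] such that one cannot find 3 sets in F with pairwise intersections of size at most 1 (i.e., ν(F,2) ≤ 2). Then |F| ≤ 10. -/
open Finset

lemma split_card {C P Q : Finset ℕ} (hC : C ⊆ P ∪ Q) (hPQ : Disjoint P Q) :
    (C ∩ P).card + (C ∩ Q).card = C.card := by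
  rw [← Finset.card_union_of_disjoint
    (hPQ.mono inter_subset_right inter_subset_right)]
  congr 1
  rw [← Finset.inter_union_distrib_left, Finset.inter_eq_left.mpr hC]

lemma key (F : Finset (Finset ℕ))
    (hnu : ∀ G ⊆ F,
      (∀ A ∈ G, ∀ B ∈ G, A ≠ B → (A ∩ B).card ≤ 1) → G.card ≤ 2)
    (P Q : Finset ℕ) (hQF : Q ∈ F) (hPcard : P.card = 3) (hQcard : Q.card = 3)
    (hPQ : Disjoint P Q)
    (S : Finset (Finset ℕ)) (hSF : S ⊆ F) (hScard : 5 ≤ S.card)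
    (hQS : Q ∉ S)
    (hmem : ∀ C ∈ S, C ⊆ P ∪ Q ∧ C.card = 3 ∧ (C ∩ P).card = 2) :
    False := by
  have hx1 : ∀ C ∈ S, (C ∩ Q).card = 1 := by
    intro C hC
    have h := split_card (hmem C hC).1 hPQ
    have h2 := (hmem C hC).2.1
    have h3 := (hmem C hC).2.2
    omega
  by_cases hpair : ∃ C ∈ S, ∃ D ∈ S, C ≠ D ∧ (C ∩ D).card ≤ 1
  · obtain ⟨C, hC, D, hD, hCD, hint⟩ := hpair
    have hQC : Q ≠ C := fun h => hQS (h ▸ hC)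
    have hQD : Q ≠ D := fun h => hQS (h ▸ hD)
    have h3 : ({Q, C, D} : Finset (Finset ℕ)).card ≤ 2 := by
      apply hnu
      · intro X hX
        simp only [Finset.mem_insert, Finset.mem_singleton] at hX
        rcases hX with rfl | rfl | rfl
        · exact hQF
        · exact hSF hC
        · exact hSF hD
      · intro X hX Y hY hXY
        have a1 : (C ∩ D).card ≤ 1 := hint
        have a2 : (D ∩ C).card ≤ 1 := by rw [Finset.inter_comm]; exact hint
        have a3 : (C ∩ Q).card ≤ 1 := (hx1 C hC).le
        have a4 : (Q ∩ C).card ≤ 1 := by rw [Finset.inter_comm]; exact (hx1 C hC).le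
        have a5 : (D ∩ Q).card ≤ 1 := (hx1 D hD).le
        have a6 : (Q ∩ D).card ≤ 1 := by rw [Finset.inter_comm]; exact (hx1 D hD).le
        simp only [Finset.mem_insert, Finset.mem_singleton] at hX hY
        rcases hX with rfl | rfl | rfl <;> rcases hY with rfl | rfl | rfl <;>
          first
          | exact absurd rfl hXY
          | assumption
    have hcard3 : ({Q, C, D} : Finset (Finset ℕ)).card = 3 := by
      rw [Finset.card_insert_of_notMem, Finset.card_insert_of_notMem,
        Finset.card_singleton]
      · simp [hCD]
      · simp [hQC, hQD]
    omega
  · push_neg at hpair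
    have recomb : ∀ C ∈ S, (C ∩ P) ∪ (C ∩ Q) = C := by
      intro C hC
      rw [← Finset.inter_union_distrib_left, Finset.inter_eq_left.mpr (hmem C hC).1]
    have inj : ∀ C ∈ S, ∀ D ∈ S, C ∩ P = D ∩ P → C ∩ Q = D ∩ Q → C = D := by
      intro C hC D hD h1 h2
      rw [← recomb C hC, ← recomb D hD, h1, h2]
    have rel : ∀ C ∈ S, ∀ D ∈ S, C ∩ P = D ∩ P ∨ C ∩ Q = D ∩ Q := by
      intro C hC D hD
      by_cases hEq : C = D
      · exact Or.inl (by rw [hEq])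
      have h2 : 2 ≤ (C ∩ D).card := hpair C hC D hD hEq
      have hsub : C ∩ D ⊆ P ∪ Q := inter_subset_left.trans (hmem C hC).1
      have hsplit := split_card hsub hPQ
      have eP : C ∩ D ∩ P = (C ∩ P) ∩ (D ∩ P) := by
        ext x; simp only [Finset.mem_inter]; tauto
      have eQ : C ∩ D ∩ Q = (C ∩ Q) ∩ (D ∩ Q) := by
        ext x; simp only [Finset.mem_inter]; tauto
      rw [eP, eQ] at hsplit
      have hup : (C ∩ P) ∪ (D ∩ P) ⊆ P := by
        exact Finset.union_subset inter_subset_right inter_subset_right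
      have hiu := Finset.card_inter_add_card_union (C ∩ P) (D ∩ P)
      have hcup : ((C ∩ P) ∪ (D ∩ P)).card ≤ 3 := by
        calc ((C ∩ P) ∪ (D ∩ P)).card ≤ P.card := Finset.card_le_card hup
        _ = 3 := hPcard
      have hCP2 := (hmem C hC).2.2
      have hDP2 := (hmem D hD).2.2
      have hlow : 1 ≤ ((C ∩ P) ∩ (D ∩ P)).card := by omega
      have hQle : ((C ∩ Q) ∩ (D ∩ Q)).card ≤ (C ∩ Q).card :=
        Finset.card_le_card inter_subset_left
      have hPle : ((C ∩ P) ∩ (D ∩ P)).card ≤ (C ∩ P).card :=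
        Finset.card_le_card inter_subset_left
      by_cases hc2 : ((C ∩ P) ∩ (D ∩ P)).card = 2
      · left
        have e1 : (C ∩ P) ∩ (D ∩ P) = C ∩ P :=
          Finset.eq_of_subset_of_card_le inter_subset_left (by omega)
        have e2 : (C ∩ P) ∩ (D ∩ P) = D ∩ P :=
          Finset.eq_of_subset_of_card_le inter_subset_right (by omega)
        rw [← e1, e2]
      · right
        have hQlow : 1 ≤ ((C ∩ Q) ∩ (D ∩ Q)).card := by omega
        have hCQ1 := hx1 C hC
        have hDQ1 := hx1 D hD
        have e1 : (C ∩ Q) ∩ (D ∩ Q) = C ∩ Q :=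
          Finset.eq_of_subset_of_card_le inter_subset_left (by omega)
        have e2 : (C ∩ Q) ∩ (D ∩ Q) = D ∩ Q :=
          Finset.eq_of_subset_of_card_le inter_subset_right (by
            have : ((C ∩ Q) ∩ (D ∩ Q)).card ≤ (D ∩ Q).card :=
              Finset.card_le_card inter_subset_right
            omega)
        rw [← e1, e2]
    by_cases hall : ∀ C ∈ S, ∀ D ∈ S, C ∩ P = D ∩ P
    · have hle : S.card ≤ (Q.powersetCard 1).card := by
        apply Finset.card_le_card_of_injOn (fun C => C ∩ Q)
        · intro C hC
          exact Finset.mem_powersetCard.mpr ⟨inter_subset_right, hx1 C hC⟩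
        · intro C hC D hD h
          exact inj C hC D hD (hall C hC D hD) h
      rw [Finset.card_powersetCard, hQcard] at hle
      norm_num at hle
      omega
    · push_neg at hall
      obtain ⟨C0, hC0, D0, hD0, hne⟩ := hall
      have hx0 : C0 ∩ Q = D0 ∩ Q := (rel C0 hC0 D0 hD0).resolve_left hne
      have hallx : ∀ E ∈ S, E ∩ Q = C0 ∩ Q := by
        intro E hE
        rcases rel E hE C0 hC0 with h | h
        · rcases rel E hE D0 hD0 with h' | h'
          · exact absurd (h.symm.trans h') hne
          · rw [h', ← hx0]
        · exact h
      have hle : S.card ≤ (P.powersetCard 2).card := by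
        apply Finset.card_le_card_of_injOn (fun C => C ∩ P)
        · intro C hC
          exact Finset.mem_powersetCard.mpr ⟨inter_subset_right, (hmem C hC).2.2⟩
        · intro C hC D hD h
          exact inj C hC D hD h ((hallx C hC).trans (hallx D hD).symm)
      rw [Finset.card_powersetCard, hPcard] at hle
      norm_num at hle
      omega

theorem stmt2 (F : Finset (Finset ℕ))
    (hF : ∀ A ∈ F, A ⊆ Finset.Icc 1 6 ∧ A.card = 3)
    (hnu : ∀ G ⊆ F,
      (∀ A ∈ G, ∀ B ∈ G, A ≠ B → (A ∩ B).card ≤ 1) → G.card ≤ 2) :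
    F.card ≤ 10 := by
  by_contra hcon
  push_neg at hcon
  set I : Finset ℕ := Finset.Icc 1 6 with hI
  have hIcard : I.card = 6 := by decide
  have h1I : (1 : ℕ) ∈ I := by decide
  have hmapsto : ∀ A ∈ F,
      (if 1 ∈ A then A else I \ A) ∈ (I.powersetCard 3).filter (fun X => 1 ∈ X) := by
    intro A hA
    obtain ⟨hsub, hcard⟩ := hF A hA
    by_cases h1 : 1 ∈ A
    · rw [if_pos h1]
      exact Finset.mem_filter.mpr ⟨Finset.mem_powersetCard.mpr ⟨hsub, hcard⟩, h1⟩
    · rw [if_neg h1]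
      refine Finset.mem_filter.mpr ⟨Finset.mem_powersetCard.mpr
        ⟨Finset.sdiff_subset, ?_⟩, Finset.mem_sdiff.mpr ⟨h1I, h1⟩⟩
      rw [Finset.card_sdiff_of_subset hsub, hIcard, hcard]
  have hcard10 : ((I.powersetCard 3).filter (fun X => 1 ∈ X)).card = 10 := by decide
  obtain ⟨A, hA, B, hB, hAB, hfeq⟩ :=
    Finset.exists_ne_map_eq_of_card_lt_of_maps_to (by omega) hmapsto
  have pairex : ∃ P ∈ F, P ⊆ I ∧ P.card = 3 ∧ I \ P ∈ F := by
    obtain ⟨hAsub, hAcard⟩ := hF A hA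
    obtain ⟨hBsub, hBcard⟩ := hF B hB
    by_cases h1A : 1 ∈ A <;> by_cases h1B : 1 ∈ B
    · rw [if_pos h1A, if_pos h1B] at hfeq; exact absurd hfeq hAB
    · rw [if_pos h1A, if_neg h1B] at hfeq
      refine ⟨A, hA, hAsub, hAcard, ?_⟩
      have : I \ A = B := by
        rw [hfeq, Finset.sdiff_sdiff_self_left, Finset.inter_eq_right.mpr hBsub]
      rw [this]; exact hB
    · rw [if_neg h1A, if_pos h1B] at hfeq
      refine ⟨B, hB, hBsub, hBcard, ?_⟩
      have : I \ B = A := by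
        rw [← hfeq, Finset.sdiff_sdiff_self_left, Finset.inter_eq_right.mpr hAsub]
      rw [this]; exact hA
    · rw [if_neg h1A, if_neg h1B] at hfeq
      exfalso
      apply hAB
      have : I \ (I \ A) = I \ (I \ B) := by rw [hfeq]
      rwa [Finset.sdiff_sdiff_self_left, Finset.sdiff_sdiff_self_left,
        Finset.inter_eq_right.mpr hAsub, Finset.inter_eq_right.mpr hBsub] at this
  obtain ⟨P, hPF, hPI, hPc, hQF⟩ := pairex
  set Q : Finset ℕ := I \ P with hQdef
  have hQc : Q.card = 3 := by rw [hQdef, Finset.card_sdiff_of_subset hPI, hIcard, hPc]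
  have hPQdisj : Disjoint P Q := Finset.disjoint_sdiff
  have hPQunion : P ∪ Q = I := Finset.union_sdiff_of_subset hPI
  have hPneQ : P ≠ Q := by
    intro h
    have := hPQdisj
    rw [← h] at this
    have hempty : P = ∅ := by
      simpa using disjoint_self.mp this
    rw [hempty] at hPc
    simp at hPc
  set R : Finset (Finset ℕ) := (F.erase P).erase Q with hRdef
  have hQmem : Q ∈ F.erase P := Finset.mem_erase.mpr ⟨hPneQ.symm, hQF⟩
  have hRcard : 9 ≤ R.card := by
    rw [hRdef, Finset.card_erase_of_mem hQmem, Finset.card_erase_of_mem hPF]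
    omega
  have hRprop : ∀ C ∈ R, C ⊆ P ∪ Q ∧ C.card = 3 ∧
      ((C ∩ P).card = 1 ∨ (C ∩ P).card = 2) := by
    intro C hC
    have hCQ : C ≠ Q := (Finset.mem_erase.mp hC).1
    have hCP : C ≠ P := (Finset.mem_erase.mp ((Finset.mem_erase.mp hC).2)).1
    have hCF : C ∈ F := (Finset.mem_erase.mp ((Finset.mem_erase.mp hC).2)).2
    obtain ⟨hCsub, hCcard⟩ := hF C hCF
    have hCsub' : C ⊆ P ∪ Q := by rw [hPQunion]; exact hCsub
    have hsplit := split_card hCsub' hPQdisj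
    refine ⟨hCsub', hCcard, ?_⟩
    have hle : (C ∩ P).card ≤ 3 := by
      calc (C ∩ P).card ≤ P.card := Finset.card_le_card inter_subset_right
      _ = 3 := hPc
    have hne3 : (C ∩ P).card ≠ 3 := by
      intro h
      apply hCP
      have h1 : C ∩ P = C := Finset.eq_of_subset_of_card_le inter_subset_left
        (by omega)
      have h2 : C ⊆ P := by rw [← h1]; exact inter_subset_right
      exact Finset.eq_of_subset_of_card_le h2 (by omega)
    have hne0 : (C ∩ P).card ≠ 0 := by
      intro h
      apply hCQ
      have hq3 : (C ∩ Q).card = 3 := by omega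
      have h1 : C ∩ Q = C := Finset.eq_of_subset_of_card_le inter_subset_left
        (by omega)
      have h2 : C ⊆ Q := by rw [← h1]; exact inter_subset_right
      exact Finset.eq_of_subset_of_card_le h2 (by omega)
    omega
  set R2 : Finset (Finset ℕ) := R.filter (fun C => (C ∩ P).card = 2) with hR2
  set R1 : Finset (Finset ℕ) := R.filter (fun C => ¬ (C ∩ P).card = 2) with hR1
  have hsum : R2.card + R1.card = R.card :=
    Finset.card_filter_add_card_filter_not _
  have hRF : R ⊆ F := (Finset.erase_subset _ _).trans (Finset.erase_subset _ _)
  rcases le_or_gt 5 R2.card with h5 | h5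
  · refine key F hnu P Q hQF hPc hQc hPQdisj R2 ((Finset.filter_subset _ _).trans hRF)
      h5 ?_ ?_
    · intro h
      exact (Finset.mem_erase.mp (Finset.mem_filter.mp h).1).1 rfl
    · intro C hC
      obtain ⟨hCR, hC2⟩ := Finset.mem_filter.mp hC
      exact ⟨(hRprop C hCR).1, (hRprop C hCR).2.1, hC2⟩
  · have h5' : 5 ≤ R1.card := by omega
    refine key F hnu Q P hPF hQc hPc hPQdisj.symm R1
      ((Finset.filter_subset _ _).trans hRF) h5' ?_ ?_
    · intro h
      exact (Finset.mem_erase.mp ((Finset.mem_erase.mp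
        (Finset.mem_filter.mp h).1).2)).1 rfl
    · intro C hC
      obtain ⟨hCR, hC2⟩ := Finset.mem_filter.mp hC
      obtain ⟨hsub, hcard, hor⟩ := hRprop C hCR
      have h1 : (C ∩ P).card = 1 := by tauto
      have hsplit := split_card hsub hPQdisj
      refine ⟨by rwa [Finset.union_comm], hcard, by omega⟩
end

section
/- Let F be a family of 3-element subsets of [6] such that one cannot find 4 sets in F with pairwise intersections of size at most 1 (i.e., ν(F,2) ≤ 3). Then |F| ≤ 14. -/
open Finset

def TT : Finset (Finset ℕ) := (Finset.Icc 1 6).powersetCard 3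

def CL : Finset (Finset (Finset ℕ)) :=
  {{{1,2,3}, {1,4,5}, {2,4,6}, {3,5,6}}, {{1,2,3}, {1,4,5}, {2,5,6}, {3,4,6}}, {{1,2,3}, {1,4,6}, {2,4,5}, {3,5,6}}, {{1,2,3}, {1,4,6}, {2,5,6}, {3,4,5}}, {{1,2,3}, {1,5,6}, {2,4,5}, {3,4,6}}, {{1,2,3}, {1,5,6}, {2,4,6}, {3,4,5}}, {{1,2,4}, {1,3,5}, {2,3,6}, {4,5,6}}, {{1,2,4}, {1,3,5}, {2,5,6}, {3,4,6}}, {{1,2,4}, {1,3,6}, {2,3,5}, {4,5,6}}, {{1,2,4}, {1,3,6}, {2,5,6}, {3,4,5}}, {{1,2,4}, {1,5,6}, {2,3,5}, {3,4,6}}, {{1,2,4}, {1,5,6}, {2,3,6}, {3,4,5}}, {{1,2,5}, {1,3,4}, {2,3,6}, {4,5,6}}, {{1,2,5}, {1,3,4}, {2,4,6}, {3,5,6}}, {{1,2,5}, {1,3,6}, {2,3,4}, {4,5,6}}, {{1,2,5}, {1,3,6}, {2,4,6}, {3,4,5}}, {{1,2,5}, {1,4,6}, {2,3,4}, {3,5,6}},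 {{1,2,5}, {1,4,6}, {2,3,6}, {3,4,5}}, {{1,2,6}, {1,3,4}, {2,3,5}, {4,5,6}}, {{1,2,6}, {1,3,4}, {2,4,5}, {3,5,6}}, {{1,2,6}, {1,3,5}, {2,3,4}, {4,5,6}}, {{1,2,6}, {1,3,5}, {2,4,5}, {3,4,6}}, {{1,2,6}, {1,4,5}, {2,3,4}, {3,5,6}}, {{1,2,6}, {1,4,5}, {2,3,5}, {3,4,6}}, {{1,3,4}, {1,5,6}, {2,3,5}, {2,4,6}}, {{1,3,4}, {1,5,6}, {2,3,6}, {2,4,5}}, {{1,3,5}, {1,4,6}, {2,3,4}, {2,5,6}}, {{1,3,5}, {1,4,6}, {2,3,6}, {2,4,5}}, {{1,3,6}, {1,4,5}, {2,3,4}, {2,5,6}}, {{1,3,6}, {1,4,5}, {2,3,5}, {2,4,6}}}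

set_option maxRecDepth 100000 in
lemma factT : TT.card = 20 := by decide

set_option maxRecDepth 100000 in
lemma fact2 : ∀ Q ∈ CL, Q ⊆ TT ∧ Q.card = 4 ∧
    ∀ A ∈ Q, ∀ B ∈ Q, A ≠ B → (A ∩ B).card ≤ 1 := by decide

set_option maxRecDepth 100000 in
lemma fact3 : CL.card = 30 := by decide

set_option maxRecDepth 100000 in
lemma fact4 : ∀ A ∈ TT, (CL.filter (fun Q => A ∈ Q)).card = 6 := by decide

set_option maxRecDepth 1000000 in
lemma fact5 : ∀ A ∈ TT, ∀ B ∈ TT, A ≠ B →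
    (∀ Q ∈ CL, ¬(A ∈ Q ∧ B ∈ Q)) → (A ∩ B).card ≠ 1 := by decide

set_option maxRecDepth 1000000 in
lemma fact6 : ∀ A ∈ TT, ∀ B ∈ TT, ∀ C ∈ TT, A ≠ B → A ≠ C → B ≠ C →
    (A ∩ B).card ≠ 1 → (A ∩ C).card ≠ 1 → (B ∩ C).card ≠ 1 →
    (TT.filter (fun D => D ≠ A ∧ D ≠ B ∧ D ≠ C ∧ (D ∩ A).card ≠ 1 ∧
      (D ∩ B).card ≠ 1 ∧ (D ∩ C).card ≠ 1)).card ≤ 1 := by decide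

theorem stmt3 (F : Finset (Finset ℕ))
    (hF : ∀ A ∈ F, A ⊆ Finset.Icc 1 6 ∧ A.card = 3)
    (hnu : ∀ G ⊆ F,
      (∀ A ∈ G, ∀ B ∈ G, A ≠ B → (A ∩ B).card ≤ 1) → G.card ≤ 3) :
    F.card ≤ 14 := by
  by_contra hlt
  push_neg at hlt
  have hFT : F ⊆ TT := by
    intro A hA
    obtain ⟨h1, h2⟩ := hF A hA
    simpa [TT, Finset.mem_powersetCard] using And.intro h1 h2
  set M := TT \ F with hMdef
  have hMsub : M ⊆ TT := Finset.sdiff_subset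
  have hMcard5 : M.card ≤ 5 := by
    have h1 : M.card = 20 - F.card := by
      rw [hMdef, Finset.card_sdiff_of_subset hFT, factT]
    have h2 := Finset.card_le_card hFT
    rw [factT] at h2
    omega
  have hhit : ∀ Q ∈ CL, ∃ A ∈ Q, A ∈ M := by
    intro Q hQ
    by_contra hcon
    push_neg at hcon
    obtain ⟨hQT, hQ4, hQp⟩ := fact2 Q hQ
    have hQF : Q ⊆ F := by
      intro A hA
      have hAT : A ∈ TT := hQT hA
      have hAM := hcon A hA
      rw [hMdef, Finset.mem_sdiff] at hAM
      tauto
    have := hnu Q hQF hQp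
    omega
  have hsum : ∑ A ∈ M, (CL.filter (fun Q => A ∈ Q)).card
      = ∑ Q ∈ CL, (M.filter (fun A => A ∈ Q)).card := by
    simp_rw [Finset.card_filter]
    exact Finset.sum_comm
  have hleft : ∑ A ∈ M, (CL.filter (fun Q => A ∈ Q)).card = 6 * M.card := by
    rw [Finset.sum_congr rfl (fun A hA => fact4 A (hMsub hA))]
    simp [mul_comm]
  have hpos : ∀ Q ∈ CL, 1 ≤ (M.filter (fun A => A ∈ Q)).card := by
    intro Q hQ
    obtain ⟨A, hAQ, hAM⟩ := hhit Q hQ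
    exact Finset.card_pos.mpr ⟨A, Finset.mem_filter.mpr ⟨hAM, hAQ⟩⟩
  have hright : 30 ≤ ∑ Q ∈ CL, (M.filter (fun A => A ∈ Q)).card := by
    calc (30 : ℕ) = ∑ _Q ∈ CL, 1 := by rw [Finset.sum_const, fact3]; simp
    _ ≤ _ := Finset.sum_le_sum hpos
  have hM5 : M.card = 5 := by omega
  have hnoshare : ∀ A ∈ M, ∀ B ∈ M, A ≠ B → ∀ Q ∈ CL, ¬(A ∈ Q ∧ B ∈ Q) := by
    rintro A hA B hB hAB Q hQ ⟨hAQ, hBQ⟩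
    have h2 : 2 ≤ (M.filter (fun X => X ∈ Q)).card := by
      apply Finset.one_lt_card.mpr
      exact ⟨A, Finset.mem_filter.mpr ⟨hA, hAQ⟩, B, Finset.mem_filter.mpr ⟨hB, hBQ⟩, hAB⟩
    have hstrict : (∑ _Q ∈ CL, 1) < ∑ Q' ∈ CL, (M.filter (fun A => A ∈ Q')).card :=
      Finset.sum_lt_sum hpos ⟨Q, hQ, by omega⟩
    rw [Finset.sum_const, fact3] at hstrict
    simp only [smul_eq_mul, mul_one] at hstrict
    omega
  have hpair : ∀ A ∈ M, ∀ B ∈ M, A ≠ B → (A ∩ B).card ≠ 1 := by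
    intro A hA B hB hAB
    exact fact5 A (hMsub hA) B (hMsub hB) hAB (hnoshare A hA B hB hAB)
  -- pick three distinct elements of M
  obtain ⟨A, hA⟩ : M.Nonempty := Finset.card_pos.mp (by omega)
  obtain ⟨B, hB⟩ : (M.erase A).Nonempty := Finset.card_pos.mp (by
    rw [Finset.card_erase_of_mem hA]; omega)
  obtain ⟨C, hC⟩ : ((M.erase A).erase B).Nonempty := Finset.card_pos.mp (by
    rw [Finset.card_erase_of_mem hB, Finset.card_erase_of_mem hA]; omega)
  have hBM : B ∈ M := Finset.mem_of_mem_erase hB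
  have hCM : C ∈ M := Finset.mem_of_mem_erase (Finset.mem_of_mem_erase hC)
  have hAB : A ≠ B := (Finset.ne_of_mem_erase hB).symm
  have hBC : B ≠ C := (Finset.ne_of_mem_erase hC).symm
  have hAC : A ≠ C := (Finset.ne_of_mem_erase (Finset.mem_of_mem_erase hC)).symm
  set S := ((M.erase A).erase B).erase C with hSdef
  have hScard : S.card = 2 := by
    rw [hSdef, Finset.card_erase_of_mem hC, Finset.card_erase_of_mem hB,
      Finset.card_erase_of_mem hA]
    omega
  have hSsub : S ⊆ TT.filter (fun D => D ≠ A ∧ D ≠ B ∧ D ≠ C ∧ (D ∩ A).card ≠ 1 ∧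
      (D ∩ B).card ≠ 1 ∧ (D ∩ C).card ≠ 1) := by
    intro D hD
    have hDC : D ≠ C := Finset.ne_of_mem_erase hD
    have hD1 := Finset.mem_of_mem_erase hD
    have hDB : D ≠ B := Finset.ne_of_mem_erase hD1
    have hD2 := Finset.mem_of_mem_erase hD1
    have hDA : D ≠ A := Finset.ne_of_mem_erase hD2
    have hDM : D ∈ M := Finset.mem_of_mem_erase hD2
    refine Finset.mem_filter.mpr ⟨hMsub hDM, hDA, hDB, hDC, ?_, ?_, ?_⟩
    · exact hpair D hDM A hA hDA
    · exact hpair D hDM B hBM hDB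
    · exact hpair D hDM C hCM hDC
  have := Finset.card_le_card hSsub
  have hf6 := fact6 A (hMsub hA) B (hMsub hBM) C (hMsub hCM) hAB hAC hBC
    (hpair A hA B hBM hAB) (hpair A hA C hCM hAC) (hpair B hBM C hCM hBC)
  omega
end

section
/- Let r ≥ k ≥ 1 and s ≥ 1 be integers. Suppose F is a family of k-element subsets of [r] such that any s+1 distinct sets in F include two sets intersecting in at least k-1 elements (i.e., ν(F, k-1) ≤ s). Then |F| ≤ r·s. -/
open Finset

theorem stmt4 (r k s : ℕ) (hk : 1 ≤ k) (hkr : k ≤ r) (hs : 1 ≤ s)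
    (F : Finset (Finset ℕ))
    (hF : ∀ A ∈ F, A ⊆ Finset.Icc 1 r ∧ A.card = k)
    (hnu : ∀ G ⊆ F,
      (∀ A ∈ G, ∀ B ∈ G, A ≠ B → (A ∩ B).card ≤ k - 2) → G.card ≤ s) :
    F.card ≤ r * s := by
  classical
  have hr : 1 ≤ r := hk.trans hkr
  have key : ∀ A ∈ F, ∀ B ∈ F, A ≠ B → A.sum id % r = B.sum id % r →
      (A ∩ B).card ≤ k - 2 := by
    intro A hA B hB hne hsum
    obtain ⟨hAsub, hAcard⟩ := hF A hA
    obtain ⟨hBsub, hBcard⟩ := hF B hB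
    by_contra h
    push_neg at h
    have h1 : (A ∩ B).card ≤ k := hAcard ▸ card_le_card inter_subset_left
    have hneqk : (A ∩ B).card ≠ k := by
      intro hc
      have e1 : A ∩ B = A := eq_of_subset_of_card_le inter_subset_left (by omega)
      have e2 : A ∩ B = B := eq_of_subset_of_card_le inter_subset_right (by omega)
      exact hne (e1 ▸ e2)
    have hck : (A ∩ B).card = k - 1 := by omega
    have hAd : (A \ B).card = 1 := by
      have := Finset.card_inter_add_card_sdiff A B
      omega
    have hBd : (B \ A).card = 1 := by
      have := Finset.card_inter_add_card_sdiff B A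
      rw [inter_comm] at this
      omega
    obtain ⟨a, ha⟩ := card_eq_one.mp hAd
    obtain ⟨b, hb⟩ := card_eq_one.mp hBd
    have haA : a ∈ A \ B := ha ▸ mem_singleton_self a
    have hbB : b ∈ B \ A := hb ▸ mem_singleton_self b
    have hab : a ≠ b := by
      intro hh
      exact (mem_sdiff.mp haA).2 (hh ▸ (mem_sdiff.mp hbB).1)
    have haI : a ∈ Finset.Icc 1 r := hAsub (mem_sdiff.mp haA).1
    have hbI : b ∈ Finset.Icc 1 r := hBsub (mem_sdiff.mp hbB).1
    rw [Finset.mem_Icc] at haI hbI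
    have hsA : (A ∩ B).sum id + a = A.sum id := by
      have := Finset.sum_inter_add_sum_sdiff A B id
      rwa [ha, Finset.sum_singleton] at this
    have hsB : (A ∩ B).sum id + b = B.sum id := by
      have := Finset.sum_inter_add_sum_sdiff B A id
      rwa [hb, Finset.sum_singleton, inter_comm] at this
    have hmod : a ≡ b [MOD r] := by
      have : (A ∩ B).sum id + a ≡ (A ∩ B).sum id + b [MOD r] := by
        rw [Nat.ModEq, hsA, hsB]; exact hsum
      exact (Nat.ModEq.add_left_cancel' _ this)
    rcases le_total a b with hle | hle
    · have hdvd : r ∣ b - a := (Nat.modEq_iff_dvd' hle).mp hmod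
      have : b - a = 0 := Nat.eq_zero_of_dvd_of_lt hdvd (by omega)
      omega
    · have hdvd : r ∣ a - b := (Nat.modEq_iff_dvd' hle).mp hmod.symm
      have : a - b = 0 := Nat.eq_zero_of_dvd_of_lt hdvd (by omega)
      omega
  have hfib := Finset.card_eq_sum_card_fiberwise
    (f := fun A : Finset ℕ => A.sum id % r) (s := F) (t := Finset.range r)
    (fun A _ => Finset.mem_range.mpr (Nat.mod_lt _ hr))
  rw [hfib]
  calc ∑ i ∈ Finset.range r, (F.filter fun A => A.sum id % r = i).card
      ≤ ∑ _i ∈ Finset.range r, s := by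
        refine Finset.sum_le_sum fun i _ => ?_
        refine hnu _ (filter_subset _ _) ?_
        intro A hA B hB hne
        have hA' := Finset.mem_filter.mp hA
        have hB' := Finset.mem_filter.mp hB
        exact key A hA'.1 B hB'.1 hne (hA'.2.trans hB'.2.symm)
    _ = r * s := by simp [mul_comm]
end

section
/- Let G' be a finite family of sets with ν(G', t₁) ≤ s for positive integers t₁, s. Then the number of unordered triples {A,B,C} ⊆ G' with |A∩B|, |B∩C|, |A∩C| ≥ t₁ is at least (s/3)·Σ_{A ∈ G'} C(d(A)/s, 2), where d(A) is the number of sets in G' intersecting A in at least t₁ elements, and C(x,2) := x(x-1)/2 for x > 1 and 0 for x ≤ 1. -/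
open Finset

/-- `c2 x = C(x,2) = x(x-1)/2` for `x > 1` and `0` otherwise. -/
noncomputable def c2 (x : ℝ) : ℝ := if 1 < x then x * (x - 1) / 2 else 0

/-- The edge set of the intersection graph on `V`. -/
def Ed (t₁ : ℕ) (V : Finset (Finset ℕ)) : Finset (Finset (Finset ℕ)) :=
  (V.powersetCard 2).filter fun P => ∀ A ∈ P, ∀ B ∈ P, A ≠ B → t₁ ≤ (A ∩ B).card

/-- Turán-type lower bound: if the intersection graph on `V` has independence number at most
`s`, then it has at least `n²/(2s) - n/2` edges. -/
lemma turan_lb (t₁ s : ℕ) (hs : 1 ≤ s) (V : Finset (Finset ℕ))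
    (hind : ∀ H ⊆ V, (∀ A ∈ H, ∀ B ∈ H, A ≠ B → (A ∩ B).card < t₁) → H.card ≤ s) :
    (V.card : ℝ) ^ 2 / (2 * s) - (V.card : ℝ) / 2 ≤ ((Ed t₁ V).card : ℝ) := by
  classical
  have hs' : (1 : ℝ) ≤ (s : ℝ) := by exact_mod_cast hs
  have h2s : (0 : ℝ) < 2 * s := by linarith
  induction V using Finset.strongInduction with
  | _ V ih =>
  by_cases hV : V.card ≤ s
  · have hn : (V.card : ℝ) ≤ (s : ℝ) := by exact_mod_cast hV
    have hn0 : (0 : ℝ) ≤ (V.card : ℝ) := Nat.cast_nonneg _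
    have h1 : (V.card : ℝ) ^ 2 / (2 * s) - (V.card : ℝ) / 2 ≤ 0 := by
      rw [sub_nonpos, div_le_div_iff₀ h2s two_pos]
      nlinarith
    exact h1.trans (Nat.cast_nonneg _)
  · push_neg at hV
    have hVne : V.Nonempty := by
      rw [← Finset.card_pos]; omega
    -- maximal independent set
    set indep : Finset (Finset ℕ) → Prop :=
      fun H => ∀ A ∈ H, ∀ B ∈ H, A ≠ B → (A ∩ B).card < t₁ with hindep
    have hSne : (V.powerset.filter indep).Nonempty :=
      ⟨∅, mem_filter.2 ⟨empty_mem_powerset V, by simp [hindep]⟩⟩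
    obtain ⟨I, hIS, hImax⟩ := (V.powerset.filter indep).exists_maximal hSne
    rw [mem_filter, mem_powerset] at hIS
    obtain ⟨hIV, hIind⟩ := hIS
    have hIcard : I.card ≤ s := hind I hIV hIind
    -- every vertex outside I has a neighbor in I
    have hnb : ∀ v ∈ V \ I, ∃ w ∈ I, t₁ ≤ (v ∩ w).card := by
      intro v hv
      rw [mem_sdiff] at hv
      by_contra hcon
      push_neg at hcon
      have hins : insert v I ∈ V.powerset.filter indep := by
        rw [mem_filter, mem_powerset]
        refine ⟨insert_subset hv.1 hIV, ?_⟩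
        intro A hA B hB hAB
        rcases mem_insert.1 hA with h1 | h1 <;> rcases mem_insert.1 hB with h2 | h2
        · exact absurd (h1.trans h2.symm) hAB
        · subst h1; exact hcon B h2
        · subst h2; rw [inter_comm]; exact hcon A h1
        · exact hIind A h1 B h2 hAB
      exact hv.2 (hImax hins (subset_insert _ _) (mem_insert_self _ _))
    choose! w hwI hw using hnb
    have hIne : I.Nonempty := by
      obtain ⟨v, hv⟩ := hVne
      rcases I.eq_empty_or_nonempty with rfl | h
      · exfalso
        have : ({v} : Finset (Finset ℕ)) ∈ V.powerset.filter indep := by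
          rw [mem_filter, mem_powerset]
          refine ⟨singleton_subset_iff.2 hv, ?_⟩
          intro A hA B hB hAB
          rw [mem_singleton] at hA hB
          exact absurd (hA.trans hB.symm) hAB
        exact Finset.notMem_empty v (hImax this (empty_subset _) (mem_singleton_self v))
      · exact h
    -- the new edges
    set F : Finset (Finset (Finset ℕ)) := (V \ I).image fun v => ({v, w v} : Finset (Finset ℕ))
      with hF
    have hvne : ∀ v ∈ V \ I, v ≠ w v := by
      intro v hv heq
      exact (mem_sdiff.1 hv).2 (heq ▸ hwI v hv)
    have hFsub : F ⊆ Ed t₁ V := by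
      intro P hP
      obtain ⟨v, hv, rfl⟩ := mem_image.1 hP
      rw [Ed, mem_filter, mem_powersetCard]
      refine ⟨⟨?_, ?_⟩, ?_⟩
      · intro X hX
        rcases mem_insert.1 hX with rfl | hX
        · exact (mem_sdiff.1 hv).1
        · rw [mem_singleton] at hX; exact hIV (hX ▸ hwI v hv)
      · rw [card_insert_of_notMem (by simp [hvne v hv]), card_singleton]
      · intro X hX Y hY hXY
        have hX' : X = v ∨ X = w v := by simpa using hX
        have hY' : Y = v ∨ Y = w v := by simpa using hY
        rcases hX' with h1 | h1 <;> rcases hY' with h2 | h2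
        · exact absurd (h1.trans h2.symm) hXY
        · rw [h1, h2]; exact hw v hv
        · rw [h1, h2, inter_comm]; exact hw v hv
        · exact absurd (h1.trans h2.symm) hXY
    have hEsub : Ed t₁ (V \ I) ⊆ Ed t₁ V := by
      intro P hP
      rw [Ed, mem_filter, mem_powersetCard] at hP ⊢
      exact ⟨⟨hP.1.1.trans (sdiff_subset), hP.1.2⟩, hP.2⟩
    have hdisj : Disjoint F (Ed t₁ (V \ I)) := by
      rw [disjoint_left]
      intro P hPF hPE
      obtain ⟨v, hv, rfl⟩ := mem_image.1 hPF
      rw [Ed, mem_filter, mem_powersetCard] at hPE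
      have : w v ∈ V \ I := hPE.1.1 (by simp)
      exact (mem_sdiff.1 this).2 (hwI v hv)
    have hFcard : F.card = (V \ I).card := by
      rw [hF]
      apply card_image_of_injOn
      intro v hv v' hv' heq
      have heq' : ({v, w v} : Finset (Finset ℕ)) = {v', w v'} := heq
      have : v ∈ ({v', w v'} : Finset (Finset ℕ)) := heq' ▸ (mem_insert_self v {w v})
      rcases mem_insert.1 this with h | h
      · exact h
      · rw [mem_singleton] at h
        exact absurd (h ▸ hwI v' hv') (mem_sdiff.1 hv).2
    have hcards : F.card + (Ed t₁ (V \ I)).card ≤ (Ed t₁ V).card := by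
      rw [← card_union_of_disjoint hdisj]
      exact card_le_card (union_subset hFsub hEsub)
    -- induction hypothesis
    have hssub : V \ I ⊂ V := Finset.sdiff_ssubset hIV hIne
    have hih := ih (V \ I) hssub (fun H hH h => hind H (hH.trans sdiff_subset) h)
    have hkn : I.card ≤ V.card := card_le_card hIV
    have hcardVI : ((V \ I).card : ℝ) = (V.card : ℝ) - (I.card : ℝ) := by
      rw [card_sdiff_of_subset hIV]
      exact Nat.cast_sub hkn
    have hks : (I.card : ℝ) ≤ (s : ℝ) := by exact_mod_cast hIcard
    have hknR : (I.card : ℝ) ≤ (V.card : ℝ) := by exact_mod_cast hkn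
    have hk0 : (0 : ℝ) ≤ (I.card : ℝ) := Nat.cast_nonneg _
    have hkey : (V.card : ℝ) ^ 2 / (2 * s) - (V.card : ℝ) / 2 ≤
        ((V.card : ℝ) - (I.card : ℝ)) + (((V.card : ℝ) - (I.card : ℝ)) ^ 2 / (2 * s)
          - ((V.card : ℝ) - (I.card : ℝ)) / 2) := by
      have heq : (((V.card : ℝ) - (I.card : ℝ)) + (((V.card : ℝ) - (I.card : ℝ)) ^ 2 / (2 * s)
            - ((V.card : ℝ) - (I.card : ℝ)) / 2)) -
          ((V.card : ℝ) ^ 2 / (2 * s) - (V.card : ℝ) / 2) =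
          (((s : ℝ) - (I.card : ℝ)) * (2 * (V.card : ℝ) - (I.card : ℝ))) / (2 * s) := by
        field_simp
        ring
      have hpos : (0 : ℝ) ≤
          (((s : ℝ) - (I.card : ℝ)) * (2 * (V.card : ℝ) - (I.card : ℝ))) / (2 * s) := by
        apply div_nonneg _ (le_of_lt h2s)
        apply mul_nonneg (by linarith) (by linarith)
      linarith
    have hFR : ((V \ I).card : ℝ) + ((Ed t₁ (V \ I)).card : ℝ) ≤ ((Ed t₁ V).card : ℝ) := by
      rw [← hFcard]
      exact_mod_cast hcards
    rw [hcardVI] at hih hFR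
    linarith

/-- Counting: edges in the neighborhood of `A` correspond to triangles containing `A`. -/
lemma ed_card_eq (t₁ : ℕ) (G : Finset (Finset ℕ)) (A : Finset ℕ) (hA : A ∈ G) :
    (Ed t₁ (G.filter fun B => B ≠ A ∧ t₁ ≤ (A ∩ B).card)).card
      = (((G.powersetCard 3).filter fun S =>
          ∀ X ∈ S, ∀ Y ∈ S, X ≠ Y → t₁ ≤ (X ∩ Y).card).filter fun S => A ∈ S).card := by
  classical
  set N := G.filter fun B => B ≠ A ∧ t₁ ≤ (A ∩ B).card with hN
  have hnotin : ∀ P ∈ Ed t₁ N, A ∉ P := by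
    intro P hP hAP
    rw [Ed, mem_filter, mem_powersetCard] at hP
    exact ((mem_filter.1 (hP.1.1 hAP)).2).1 rfl
  apply card_bij (fun P _ => insert A P)
  · intro P hP
    have hAP : A ∉ P := hnotin P hP
    rw [Ed, mem_filter, mem_powersetCard] at hP
    obtain ⟨⟨hPN, hP2⟩, hPcond⟩ := hP
    rw [mem_filter, mem_filter, mem_powersetCard]
    refine ⟨⟨⟨?_, ?_⟩, ?_⟩, mem_insert_self _ _⟩
    · intro X hX
      rcases mem_insert.1 hX with rfl | hX
      · exact hA
      · exact (mem_filter.1 (hPN hX)).1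
    · rw [card_insert_of_notMem hAP, hP2]
    · intro X hX Y hY hXY
      rcases mem_insert.1 hX with h1 | h1 <;> rcases mem_insert.1 hY with h2 | h2
      · exact absurd (h1.trans h2.symm) hXY
      · rw [h1]; exact ((mem_filter.1 (hPN h2)).2).2
      · rw [h2, inter_comm]; exact ((mem_filter.1 (hPN h1)).2).2
      · exact hPcond X h1 Y h2 hXY
  · intro P₁ h₁ P₂ h₂ he
    have hA1 : A ∉ P₁ := hnotin P₁ h₁
    have hA2 : A ∉ P₂ := hnotin P₂ h₂
    rw [← erase_insert hA1, ← erase_insert hA2, he]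
  · intro S hS
    rw [mem_filter, mem_filter, mem_powersetCard] at hS
    obtain ⟨⟨⟨hSG, hS3⟩, hScond⟩, hAS⟩ := hS
    refine ⟨S.erase A, ?_, insert_erase hAS⟩
    rw [Ed, mem_filter, mem_powersetCard]
    refine ⟨⟨?_, ?_⟩, ?_⟩
    · intro B hB
      have hBA := ne_of_mem_erase hB
      have hBS := mem_of_mem_erase hB
      exact mem_filter.2 ⟨hSG hBS, hBA, hScond A hAS B hBS (Ne.symm hBA)⟩
    · rw [card_erase_of_mem hAS, hS3]
    · intro X hX Y hY hXY
      exact hScond X (mem_of_mem_erase hX) Y (mem_of_mem_erase hY) hXY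

theorem stmt7 (t₁ s : ℕ) (ht : 1 ≤ t₁) (hs : 1 ≤ s) (G : Finset (Finset ℕ))
    (hnu : ∀ H ⊆ G,
      (∀ A ∈ H, ∀ B ∈ H, A ≠ B → (A ∩ B).card < t₁) → H.card ≤ s) :
    ((s : ℝ) / 3) *
        ∑ A ∈ G, c2 (((G.filter fun B => B ≠ A ∧ t₁ ≤ (A ∩ B).card).card : ℝ) / s) ≤
      (((G.powersetCard 3).filter fun S =>
          ∀ A ∈ S, ∀ B ∈ S, A ≠ B → t₁ ≤ (A ∩ B).card).card : ℝ) := by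
  classical
  set T := (G.powersetCard 3).filter fun S =>
      ∀ A ∈ S, ∀ B ∈ S, A ≠ B → t₁ ≤ (A ∩ B).card with hT
  have hs0 : (0 : ℝ) < (s : ℝ) := by exact_mod_cast hs
  -- per-vertex bound
  have hper : ∀ A ∈ G, (s : ℝ) *
      c2 (((G.filter fun B => B ≠ A ∧ t₁ ≤ (A ∩ B).card).card : ℝ) / s)
      ≤ ((Ed t₁ (G.filter fun B => B ≠ A ∧ t₁ ≤ (A ∩ B).card)).card : ℝ) := by
    intro A _
    set N := G.filter fun B => B ≠ A ∧ t₁ ≤ (A ∩ B).card with hNdef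
    have hlb := turan_lb t₁ s hs N
      (fun H hH h => hnu H (hH.trans (filter_subset _ _)) h)
    rw [c2]
    by_cases hx : 1 < ((N.card : ℝ) / s)
    · rw [if_pos hx]
      have : (s : ℝ) * ((N.card : ℝ) / s * ((N.card : ℝ) / s - 1) / 2) =
          (N.card : ℝ) ^ 2 / (2 * s) - (N.card : ℝ) / 2 := by
        field_simp
      rw [this]
      exact hlb
    · rw [if_neg hx, mul_zero]
      exact Nat.cast_nonneg _
  -- double counting
  have hsum : ∑ A ∈ G, ((Ed t₁ (G.filter fun B => B ≠ A ∧ t₁ ≤ (A ∩ B).card)).card)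
      = 3 * T.card := by
    have h1 : ∀ A ∈ G, (Ed t₁ (G.filter fun B => B ≠ A ∧ t₁ ≤ (A ∩ B).card)).card
        = (T.filter fun S => A ∈ S).card := fun A hA => ed_card_eq t₁ G A hA
    rw [Finset.sum_congr rfl h1]
    have h2 : ∀ S ∈ T, (G.filter fun A => A ∈ S).card = 3 := by
      intro S hS
      rw [hT, mem_filter, mem_powersetCard] at hS
      rw [filter_mem_eq_inter, inter_eq_right.2 hS.1.1]
      exact hS.1.2
    calc ∑ A ∈ G, (T.filter fun S => A ∈ S).card
        = ∑ A ∈ G, ∑ S ∈ T, if A ∈ S then 1 else 0 :=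
          Finset.sum_congr rfl fun A _ => Finset.card_filter _ _
      _ = ∑ S ∈ T, ∑ A ∈ G, if A ∈ S then 1 else 0 := Finset.sum_comm
      _ = ∑ S ∈ T, (G.filter fun A => A ∈ S).card :=
          Finset.sum_congr rfl fun S _ => (Finset.card_filter _ _).symm
      _ = ∑ S ∈ T, 3 := Finset.sum_congr rfl h2
      _ = 3 * T.card := by rw [Finset.sum_const, smul_eq_mul, mul_comm]
  have hsumR : ∑ A ∈ G, ((Ed t₁ (G.filter fun B => B ≠ A ∧ t₁ ≤ (A ∩ B).card)).card : ℝ)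
      = 3 * (T.card : ℝ) := by exact_mod_cast hsum
  calc ((s : ℝ) / 3) *
        ∑ A ∈ G, c2 (((G.filter fun B => B ≠ A ∧ t₁ ≤ (A ∩ B).card).card : ℝ) / s)
      = (1 / 3) * ∑ A ∈ G, (s : ℝ) *
          c2 (((G.filter fun B => B ≠ A ∧ t₁ ≤ (A ∩ B).card).card : ℝ) / s) := by
        rw [Finset.mul_sum, Finset.mul_sum]
        congr 1
        ext A
        ring
    _ ≤ (1 / 3) * ∑ A ∈ G,
        ((Ed t₁ (G.filter fun B => B ≠ A ∧ t₁ ≤ (A ∩ B).card)).card : ℝ) := by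
        apply mul_le_mul_of_nonneg_left _ (by norm_num)
        exact Finset.sum_le_sum hper
    _ = (T.card : ℝ) := by rw [hsumR]; ring
end

section
/- Let F ⊆ {F ⊆ [n] : |F| = k} with ν(F, k-1) ≤ s, and suppose G = {A_1,...,A_m} ⊆ F is an inclusion-maximal (m, k-1)-sunflower with m ≥ 2s+1 (i.e., the A_i are k-sets whose pairwise intersections all equal a common (k-1)-set X, and no further set of F can be added preserving this). Then ν(F \ G, k-1) ≤ s - 1. -/
open Finset

theorem stmt13 (n k s m : ℕ) (hk : 2 ≤ k) (hs : 1 ≤ s) (hm : 2 * s + 1 ≤ m)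
    (F : Finset (Finset ℕ)) (hF : ∀ A ∈ F, A ⊆ Finset.range n ∧ A.card = k)
    (hnu : ∀ G ⊆ F,
      (∀ A ∈ G, ∀ B ∈ G, A ≠ B → (A ∩ B).card ≤ k - 2) → G.card ≤ s)
    (G : Finset (Finset ℕ)) (hGF : G ⊆ F) (hGc : G.card = m)
    (X : Finset ℕ) (hX : X.card = k - 1)
    (hcore : ∀ A ∈ G, ∀ B ∈ G, A ≠ B → A ∩ B = X)
    (hmaxG : ∀ B ∈ F, B ∉ G → ¬ X ⊆ B) :
    ∀ H ⊆ F \ G,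
      (∀ A ∈ H, ∀ B ∈ H, A ≠ B → (A ∩ B).card ≤ k - 2) → H.card ≤ s - 1 := by
  intro H hHFG hHmatch
  by_contra hcon
  have hHs : s ≤ H.card := by omega
  have hHF : H ⊆ F := hHFG.trans (sdiff_subset)
  have hHcard : H.card ≤ s := hnu H hHF hHmatch
  have hXA : ∀ A ∈ G, X ⊆ A := by
    intro A hA
    obtain ⟨A', hA', hne⟩ := Finset.exists_mem_ne (show 1 < G.card by omega) A
    rw [← hcore A' hA' A hA hne]
    exact inter_subset_right
  have hcardA : ∀ A ∈ G, A.card = k := fun A hA => (hF A (hGF hA)).2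
  have hAx : ∀ A ∈ G, ∃ x, x ∉ X ∧ A = insert x X := by
    intro A hA
    have h1 : (A \ X).card = 1 := by
      rw [card_sdiff_of_subset (hXA A hA), hcardA A hA, hX]; omega
    obtain ⟨x, hx⟩ := Finset.card_eq_one.mp h1
    have hxm : x ∈ A \ X := hx ▸ Finset.mem_singleton_self x
    refine ⟨x, (Finset.mem_sdiff.mp hxm).2, ?_⟩
    have h2 := Finset.sdiff_union_of_subset (hXA A hA)
    rw [hx] at h2
    rw [Finset.insert_eq, h2]
  set blocked := H.biUnion (fun B => G.filter (fun A => k - 1 ≤ (A ∩ B).card)) with hbdef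
  have hperB : ∀ B ∈ H, (G.filter (fun A => k - 1 ≤ (A ∩ B).card)).card ≤ 2 := by
    intro B hB
    have hBFG := Finset.mem_sdiff.mp (hHFG hB)
    have hBcard : B.card = k := (hF B hBFG.1).2
    have hnXB : ¬ X ⊆ B := hmaxG B hBFG.1 hBFG.2
    have hXB : (X ∩ B).card ≤ k - 2 := by
      have hne : X ∩ B ≠ X := by
        intro h
        exact hnXB (h ▸ Finset.inter_subset_right)
      have := Finset.card_lt_card (Finset.inter_subset_left.ssubset_of_ne hne)
      omega
    have key : ∀ A ∈ G.filter (fun A => k - 1 ≤ (A ∩ B).card),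
        ∃ x ∈ B \ X, A = insert x X := by
      intro A hA
      rw [Finset.mem_filter] at hA
      obtain ⟨hAG, hAB⟩ := hA
      obtain ⟨x, hxX, hxA⟩ := hAx A hAG
      refine ⟨x, ?_, hxA⟩
      have hsub : A ∩ B ⊆ insert x (X ∩ B) := by
        intro y hy
        rw [Finset.mem_inter, hxA, Finset.mem_insert] at hy
        rcases hy.1 with h | h
        · exact Finset.mem_insert.mpr (Or.inl h)
        · exact Finset.mem_insert.mpr (Or.inr (Finset.mem_inter.mpr ⟨h, hy.2⟩))
      have hc := Finset.card_le_card hsub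
      have hc2 := Finset.card_insert_le x (X ∩ B)
      by_cases hxB : x ∈ B
      · exact Finset.mem_sdiff.mpr ⟨hxB, hxX⟩
      · exfalso
        have hsub2 : A ∩ B ⊆ X ∩ B := by
          intro y hy
          have := hsub hy
          rw [Finset.mem_insert] at this
          rcases this with h | h
          · exact absurd ((Finset.mem_inter.mp hy).2) (h ▸ hxB)
          · exact h
        have := Finset.card_le_card hsub2
        omega
    have hsub3 : G.filter (fun A => k - 1 ≤ (A ∩ B).card) ⊆
        (B \ X).image (fun x => insert x X) := by
      intro A hA
      obtain ⟨x, hx, hAx'⟩ := key A hA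
      exact Finset.mem_image.mpr ⟨x, hx, hAx'.symm⟩
    rcases (G.filter (fun A => k - 1 ≤ (A ∩ B).card)).eq_empty_or_nonempty with he | ⟨A₀, hA₀⟩
    · rw [he]; simp
    · have hA₀' := hA₀
      rw [Finset.mem_filter] at hA₀'
      obtain ⟨hA₀G, hA₀B⟩ := hA₀'
      obtain ⟨x₀, hx₀X, hx₀A⟩ := hAx A₀ hA₀G
      -- show (X ∩ B).card = k - 2
      have hsub : A₀ ∩ B ⊆ insert x₀ (X ∩ B) := by
        intro y hy
        rw [Finset.mem_inter, hx₀A, Finset.mem_insert] at hy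
        rcases hy.1 with h | h
        · exact Finset.mem_insert.mpr (Or.inl h)
        · exact Finset.mem_insert.mpr (Or.inr (Finset.mem_inter.mpr ⟨h, hy.2⟩))
      have hc := Finset.card_le_card hsub
      have hc2 := Finset.card_insert_le x₀ (X ∩ B)
      have hXBeq : (X ∩ B).card = k - 2 := by omega
      have hBXcard : (B \ X).card = 2 := by
        have h1 : (B \ X).card + (B ∩ X).card = B.card := Finset.card_sdiff_add_card_inter B X
        rw [Finset.inter_comm] at h1
        omega
      calc (G.filter (fun A => k - 1 ≤ (A ∩ B).card)).card
          ≤ ((B \ X).image (fun x => insert x X)).card := Finset.card_le_card hsub3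
        _ ≤ (B \ X).card := Finset.card_image_le
        _ = 2 := hBXcard
  have hblock_card : blocked.card ≤ 2 * H.card := by
    calc blocked.card ≤ ∑ B ∈ H, (G.filter (fun A => k - 1 ≤ (A ∩ B).card)).card :=
          Finset.card_biUnion_le
      _ ≤ ∑ B ∈ H, 2 := Finset.sum_le_sum hperB
      _ = 2 * H.card := by rw [Finset.sum_const, smul_eq_mul, mul_comm]
  have hne : (G \ blocked).Nonempty := by
    rw [← Finset.card_pos]
    have := Finset.le_card_sdiff blocked G
    omega
  obtain ⟨A, hA⟩ := hne
  rw [Finset.mem_sdiff] at hA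
  obtain ⟨hAG, hAb⟩ := hA
  have hgood : ∀ B ∈ H, (A ∩ B).card ≤ k - 2 := by
    intro B hB
    by_contra h
    exact hAb (Finset.mem_biUnion.mpr ⟨B, hB, Finset.mem_filter.mpr ⟨hAG, by omega⟩⟩)
  have hAnH : A ∉ H := fun h => (Finset.mem_sdiff.mp (hHFG h)).2 hAG
  have hins : insert A H ⊆ F := Finset.insert_subset (hGF hAG) hHF
  have hmatch' : ∀ C ∈ insert A H, ∀ D ∈ insert A H, C ≠ D → (C ∩ D).card ≤ k - 2 := by
    intro C hC D hD hne
    rw [Finset.mem_insert] at hC hD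
    rcases hC with rfl | hC <;> rcases hD with rfl | hD
    · exact absurd rfl hne
    · exact hgood D hD
    · rw [Finset.inter_comm]; exact hgood C hC
    · exact hHmatch C hC D hD hne
  have := hnu (insert A H) hins hmatch'
  rw [Finset.card_insert_of_notMem hAnH] at this
  omega
end

section
/- Suppose p_1, ..., p_{s+1} are positive reals with Σ p_i ≤ 1/2, and Q_1, ..., Q_{s+1} are upward-closed families of subsets of [n] with μ_{p_i}(Q_i) ≥ 3(s+1)p_i for each i, where μ_p is the p-biased product measure. Then there exist pairwise disjoint sets Q_1 ∈ Q_1, ..., Q_{s+1} ∈ Q_{s+1}. -/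
open Finset

private def mu (r : ℝ) (n : ℕ) (Q : Finset (Finset ℕ)) : ℝ :=
  ∑ A ∈ Q, r ^ A.card * (1 - r) ^ (n - A.card)

private lemma mu_mono {r : ℝ} (h0 : 0 ≤ r) (h1 : r ≤ 1) {n : ℕ} {Q R : Finset (Finset ℕ)}
    (h : Q ⊆ R) : mu r n Q ≤ mu r n R := by
  apply Finset.sum_le_sum_of_subset_of_nonneg h
  intro A _ _
  have h2 : (0:ℝ) ≤ 1 - r := by linarith
  positivity

private lemma mu_split (r : ℝ) (n : ℕ) (Q : Finset (Finset ℕ))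
    (hQ : ∀ A ∈ Q, A ⊆ range (n+1)) :
    mu r (n+1) Q = (1 - r) * mu r n (Q.filter fun A => n ∉ A)
      + r * mu r n (((range n).powerset).filter fun A => insert n A ∈ Q) := by
  classical
  have hsplit : mu r (n+1) Q
      = ∑ A ∈ Q.filter (fun A => n ∉ A), r ^ A.card * (1-r) ^ (n+1 - A.card)
      + ∑ A ∈ Q.filter (fun A => ¬ (n ∉ A)), r ^ A.card * (1-r) ^ (n+1 - A.card) := by
    rw [Finset.sum_filter_add_sum_filter_not]
    rfl
  have h1 : ∑ A ∈ Q.filter (fun A => n ∉ A), r ^ A.card * (1-r) ^ (n+1 - A.card)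
      = (1 - r) * mu r n (Q.filter fun A => n ∉ A) := by
    rw [mu, Finset.mul_sum]
    apply Finset.sum_congr rfl
    intro A hA
    rw [Finset.mem_filter] at hA
    have hsubn : A ⊆ range n := by
      intro x hx
      have hx1 : x ∈ range (n+1) := hQ A hA.1 hx
      rw [Finset.mem_range] at hx1 ⊢
      rcases Nat.lt_succ_iff_lt_or_eq.mp hx1 with h | h
      · exact h
      · exact absurd (h ▸ hx) hA.2
    have hcard : A.card ≤ n := le_trans (Finset.card_le_card hsubn) (by simp)
    rw [show n + 1 - A.card = (n - A.card) + 1 by omega, pow_succ]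
    ring
  have h2 : ∑ A ∈ Q.filter (fun A => ¬ (n ∉ A)), r ^ A.card * (1-r) ^ (n+1 - A.card)
      = r * mu r n (((range n).powerset).filter fun A => insert n A ∈ Q) := by
    rw [mu, Finset.mul_sum]
    apply Finset.sum_nbij' (i := fun A => A.erase n) (j := fun B => insert n B)
    · intro A hA
      rw [Finset.mem_filter] at hA
      have hnA : n ∈ A := by simpa using hA.2
      rw [Finset.mem_filter, Finset.mem_powerset]
      constructor
      · intro x hx
        rw [Finset.mem_erase] at hx
        have hx1 : x ∈ range (n+1) := hQ A hA.1 hx.2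
        rw [Finset.mem_range] at hx1 ⊢
        omega
      · rw [Finset.insert_erase hnA]
        exact hA.1
    · intro B hB
      rw [Finset.mem_filter, Finset.mem_powerset] at hB
      rw [Finset.mem_filter]
      exact ⟨hB.2, by simp⟩
    · intro A hA
      rw [Finset.mem_filter] at hA
      have hnA : n ∈ A := by simpa using hA.2
      exact Finset.insert_erase hnA
    · intro B hB
      rw [Finset.mem_filter, Finset.mem_powerset] at hB
      have hnB : n ∉ B := by
        intro h
        have := hB.1 h
        simp at this
      exact Finset.erase_insert hnB
    · intro A hA
      rw [Finset.mem_filter] at hA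
      have hnA : n ∈ A := by simpa using hA.2
      have hcard : (A.erase n).card + 1 = A.card := Finset.card_erase_add_one hnA
      have hsubn : A.erase n ⊆ range n := by
        intro x hx
        rw [Finset.mem_erase] at hx
        have hx1 : x ∈ range (n+1) := hQ A hA.1 hx.2
        rw [Finset.mem_range] at hx1 ⊢
        omega
      have hc2 : (A.erase n).card ≤ n := le_trans (Finset.card_le_card hsubn) (by simp)
      rw [show A.card = (A.erase n).card + 1 by omega]
      rw [show n + 1 - ((A.erase n).card + 1) = n - (A.erase n).card by omega, pow_succ]
      ring
  rw [hsplit, h1, h2]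

private lemma main_lemma (s : ℕ) (p : Fin (s+1) → ℝ) (hp : ∀ i, 0 < p i)
    (hpsum : ∑ i, p i ≤ 1/2) :
    ∀ n : ℕ, ∀ Q : Fin (s+1) → Finset (Finset ℕ),
      (∀ i, ∀ A ∈ Q i, A ⊆ range n) →
      (∀ i, ∀ A ∈ Q i, ∀ B : Finset ℕ, A ⊆ B → B ⊆ range n → B ∈ Q i) →
      (∀ j, p j * (1 + 2 * ∑ l ∈ univ.erase j, (1 - mu (p l) n (Q l))) < mu (p j) n (Q j)) →
      ∃ f : Fin (s+1) → Finset ℕ, (∀ i, f i ∈ Q i) ∧ ∀ i j, i ≠ j → Disjoint (f i) (f j) := by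
  classical
  have hple : ∀ i, p i ≤ 1/2 := by
    intro i
    have h := Finset.single_le_sum (f := p) (fun j _ => (hp j).le) (Finset.mem_univ i)
    linarith
  intro n
  induction n with
  | zero =>
    intro Q hsub hup hinv
    have hQsing : ∀ l, Q l = ∅ ∨ Q l = {∅} := by
      intro l
      rw [← Finset.subset_singleton_iff]
      intro A hA
      rw [Finset.mem_singleton]
      have h := hsub l A hA
      rw [Finset.range_zero, Finset.subset_empty] at h
      exact h
    have hmuval : ∀ l, mu (p l) 0 (Q l) = 0 ∨ mu (p l) 0 (Q l) = 1 := by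
      intro l
      rcases hQsing l with h | h <;> rw [h]
      · left; simp [mu]
      · right; simp [mu]
    have hQmem : ∀ l, ∅ ∈ Q l := by
      intro l
      rcases hQsing l with h | h
      · exfalso
        have hmu0 : mu (p l) 0 (Q l) = 0 := by rw [h]; simp [mu]
        have hpos : (0:ℝ) ≤ ∑ j ∈ univ.erase l, (1 - mu (p j) 0 (Q j)) := by
          apply Finset.sum_nonneg
          intro j _
          rcases hmuval j with h' | h' <;> rw [h'] <;> norm_num
        have hi := hinv l
        rw [hmu0] at hi
        nlinarith [hp l]
      · rw [h]; simp
    exact ⟨fun _ => ∅, fun i => hQmem i, fun i j _ => by simp⟩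
  | succ n IH =>
    intro Q hsub hup hinv
    set Q0 : Fin (s+1) → Finset (Finset ℕ) :=
      fun l => (Q l).filter (fun A => n ∉ A) with hQ0def
    set Q1 : Fin (s+1) → Finset (Finset ℕ) :=
      fun l => ((range n).powerset).filter (fun A => insert n A ∈ Q l) with hQ1def
    set a : Fin (s+1) → ℝ := fun l => mu (p l) n (Q0 l) with hadef
    set b : Fin (s+1) → ℝ := fun l => mu (p l) n (Q1 l) with hbdef
    set m : Fin (s+1) → ℝ := fun l => mu (p l) (n+1) (Q l) with hmdef
    have hsplit : ∀ l, m l = (1 - p l) * a l + p l * b l := by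
      intro l
      simp only [hmdef, hadef, hbdef, hQ0def, hQ1def]
      exact mu_split (p l) n (Q l) (hsub l)
    have hQ01 : ∀ l, Q0 l ⊆ Q1 l := by
      intro l A hA
      simp only [hQ0def, Finset.mem_filter] at hA
      have hsubn : A ⊆ range n := by
        intro x hx
        have hx1 : x ∈ range (n+1) := hsub l A hA.1 hx
        rw [Finset.mem_range] at hx1 ⊢
        have hxn : x ≠ n := fun h => hA.2 (h ▸ hx)
        omega
      simp only [hQ1def, Finset.mem_filter, Finset.mem_powerset]
      refine ⟨hsubn, ?_⟩
      apply hup l A hA.1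
      · exact Finset.subset_insert n A
      · intro x hx
        rw [Finset.mem_insert] at hx
        rcases hx with h | h
        · rw [h]; simp
        · exact Finset.range_subset_range.mpr (Nat.le_succ n) (hsubn h)
    have hab : ∀ l, a l ≤ b l := by
      intro l
      simp only [hadef, hbdef]
      exact mu_mono (hp l).le (by linarith [hple l]) (hQ01 l)
    clear_value a b m
    set δ : Fin (s+1) → ℝ := fun l => b l - a l with hδdef
    clear_value δ
    have hδnn : ∀ l, 0 ≤ δ l := by
      intro l
      simp only [hδdef]
      linarith [hab l]
    obtain ⟨i, -, hmax⟩ := Finset.exists_max_image univ δ ⟨0, Finset.mem_univ 0⟩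
    have hδle : ∀ l, δ l ≤ δ i := fun l => hmax l (Finset.mem_univ l)
    set R : Fin (s+1) → Finset (Finset ℕ) := fun l => if l = i then Q1 i else Q0 l with hRdef
    have hRsub : ∀ l, ∀ A ∈ R l, A ⊆ range n := by
      intro l A hA
      simp only [hRdef] at hA
      by_cases h : l = i
      · rw [if_pos h] at hA
        simp only [hQ1def, Finset.mem_filter, Finset.mem_powerset] at hA
        exact hA.1
      · rw [if_neg h] at hA
        simp only [hQ0def, Finset.mem_filter] at hA
        intro x hx
        have hx1 : x ∈ range (n+1) := hsub l A hA.1 hx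
        rw [Finset.mem_range] at hx1 ⊢
        have hxn : x ≠ n := fun he => hA.2 (he ▸ hx)
        omega
    have hRup : ∀ l, ∀ A ∈ R l, ∀ B : Finset ℕ, A ⊆ B → B ⊆ range n → B ∈ R l := by
      intro l A hA B hAB hB
      simp only [hRdef] at hA ⊢
      by_cases h : l = i
      · rw [if_pos h] at hA ⊢
        simp only [hQ1def, Finset.mem_filter, Finset.mem_powerset] at hA ⊢
        refine ⟨hB, ?_⟩
        apply hup i (insert n A) hA.2
        · exact Finset.insert_subset_insert n hAB
        · intro x hx
          rw [Finset.mem_insert] at hx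
          rcases hx with h' | h'
          · rw [h']; simp
          · exact Finset.range_subset_range.mpr (Nat.le_succ n) (hB h')
      · rw [if_neg h] at hA ⊢
        simp only [hQ0def, Finset.mem_filter] at hA ⊢
        constructor
        · apply hup l A hA.1 B hAB
          exact fun x hx => Finset.range_subset_range.mpr (Nat.le_succ n) (hB hx)
        · intro hn
          have hc := hB hn
          simp at hc
    have hRval : ∀ l, R l = if l = i then Q1 i else Q0 l := fun l => by rw [hRdef]
    have hRmu : ∀ l, mu (p l) n (R l) = if l = i then b i else a l := by
      intro l
      by_cases h : l = i
      · subst h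
        rw [if_pos rfl]
        have hRl : R l = Q1 l := by rw [hRval l, if_pos rfl]
        rw [hRl, hbdef]
      · rw [if_neg h]
        have hRl : R l = Q0 l := by rw [hRval l, if_neg h]
        rw [hRl, hadef]
    set S : ℝ := ∑ l, (1 - m l) with hSdef
    set P : ℝ := ∑ l, p l * δ l with hPdef
    clear_value S P
    -- measure identity for the new configuration
    have hNsum : ∑ l, (1 - mu (p l) n (R l)) = S + P - δ i := by
      have h1 : ∑ l, (1 - mu (p l) n (R l)) - S = ∑ l, (m l - mu (p l) n (R l)) := by
        rw [hSdef, ← Finset.sum_sub_distrib]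
        apply Finset.sum_congr rfl
        intro l _
        ring
      have h2 : ∑ l ∈ univ.erase i, (m l - mu (p l) n (R l))
          = ∑ l ∈ univ.erase i, p l * δ l := by
        apply Finset.sum_congr rfl
        intro l hl
        have hli : l ≠ i := (Finset.mem_erase.mp hl).1
        rw [hRmu l, if_neg hli]
        simp only [hδdef]
        linear_combination hsplit l
      have h3 : ∑ l ∈ univ.erase i, (m l - mu (p l) n (R l)) + (m i - mu (p i) n (R i))
          = ∑ l, (m l - mu (p l) n (R l)) :=
        Finset.sum_erase_add univ _ (Finset.mem_univ i)
      have h4 : ∑ l ∈ univ.erase i, p l * δ l + p i * δ i = P := by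
        rw [hPdef]
        exact Finset.sum_erase_add univ _ (Finset.mem_univ i)
      have h5 : m i - mu (p i) n (R i) = p i * δ i - δ i := by
        rw [hRmu i, if_pos rfl]
        simp only [hδdef]
        linear_combination hsplit i
      linarith [h1, h2, h3, h4, h5]
    have hmval : ∀ l, mu (p l) (n+1) (Q l) = m l := fun l => by rw [hmdef]
    have hinv' : ∀ j, p j * (1 + 2 * (S - (1 - m j))) < m j := by
      intro j
      have hi := hinv j
      rw [Finset.sum_erase_eq_sub (Finset.mem_univ j)] at hi
      simp only [hmval] at hi
      rw [hSdef]
      exact hi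
    have hPbound : ∀ j, P ≤ p j * δ j + ((∑ l, p l) - p j) * δ i := by
      intro j
      have h1 : ∑ l ∈ univ.erase j, p l * δ l ≤ ∑ l ∈ univ.erase j, p l * δ i := by
        apply Finset.sum_le_sum
        intro l _
        exact mul_le_mul_of_nonneg_left (hδle l) (hp l).le
      have h2 : ∑ l ∈ univ.erase j, p l * δ i = ((∑ l, p l) - p j) * δ i := by
        rw [← Finset.sum_mul, Finset.sum_erase_eq_sub (Finset.mem_univ j)]
      have h3 : ∑ l ∈ univ.erase j, p l * δ l + p j * δ j = P := by
        rw [hPdef]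
        exact Finset.sum_erase_add univ _ (Finset.mem_univ j)
      linarith
    have hRinv : ∀ j, p j * (1 + 2 * ∑ l ∈ univ.erase j, (1 - mu (p l) n (R l))) <
        mu (p j) n (R j) := by
      intro j
      rw [Finset.sum_erase_eq_sub (Finset.mem_univ j), hNsum]
      by_cases hji : j = i
      · subst hji
        rw [hRmu j, if_pos rfl]
        have hbi : b j - m j = (1 - p j) * δ j := by
          simp only [hδdef]
          linear_combination -hsplit j
        have h₁ : ((∑ l, p l) - p j) * δ j ≤ (1/2 - p j) * δ j :=
          mul_le_mul_of_nonneg_right (by linarith) (hδnn j)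
        have hq : (0:ℝ) ≤ δ j * (1 - 2 * p j + 2 * p j ^ 2) := by
          apply mul_nonneg (hδnn j)
          nlinarith [sq_nonneg (p j - 1/2)]
        have hprod : p j * (P - p j * δ j) ≤ p j * ((1/2 - p j) * δ j) :=
          mul_le_mul_of_nonneg_left (by linarith [hPbound j, h₁]) (hp j).le
        have key : 2 * p j * (P - p j * δ j) ≤ (1 - p j) * δ j := by nlinarith [hprod, hq]
        have hpbi : p j * (b j - m j) = p j * ((1 - p j) * δ j) := by rw [hbi]
        nlinarith [hinv' j, key, hpbi, hbi]
      · rw [hRmu j, if_neg hji]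
        have haj : m j - a j = p j * δ j := by
          simp only [hδdef]
          linear_combination hsplit j
        have h₁ : ((∑ l, p l) - p j) * δ i ≤ (1/2 - p j) * δ i :=
          mul_le_mul_of_nonneg_right (by linarith) (hδnn i)
        have key2 : 2 * (P - δ i) ≤ 2 * (p j * δ j) - δ j := by
          have hPb := hPbound j
          nlinarith [hδle j, mul_nonneg (hp j).le (hδnn i), hδnn i]
        have key2' : p j * (2 * (P - δ i)) ≤ p j * (2 * (p j * δ j) - δ j) :=
          mul_le_mul_of_nonneg_left key2 (hp j).le
        have hpaj : p j * (m j - a j) = p j * (p j * δ j) := by rw [haj]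
        nlinarith [hinv' j, key2', hpaj, haj]
    obtain ⟨f, hf, hdisj⟩ := IH R hRsub hRup hRinv
    have hfr : ∀ l, f l ⊆ range n := fun l => hRsub l (f l) (hf l)
    have hfn : ∀ l, n ∉ f l := by
      intro l h
      have hc := hfr l h
      simp at hc
    have hmem1 : ∀ l, l ≠ i → f l ∈ Q l := by
      intro l hl
      have hfl := hf l
      rw [hRval l, if_neg hl] at hfl
      simp only [hQ0def, Finset.mem_filter] at hfl
      exact hfl.1
    have hmem2 : insert n (f i) ∈ Q i := by
      have hfl := hf i
      rw [hRval i, if_pos rfl] at hfl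
      simp only [hQ1def, Finset.mem_filter] at hfl
      exact hfl.2
    refine ⟨fun l => if l = i then insert n (f i) else f l, ?_, ?_⟩
    · intro l
      show (if l = i then insert n (f i) else f l) ∈ Q l
      by_cases h : l = i
      · rw [if_pos h, h]
        exact hmem2
      · rw [if_neg h]
        exact hmem1 l h
    · intro l j hlj
      show Disjoint (if l = i then insert n (f i) else f l)
        (if j = i then insert n (f i) else f j)
      by_cases hl : l = i <;> by_cases hj : j = i
      · exact absurd (hl.trans hj.symm) hlj
      · rw [if_pos hl, if_neg hj]
        rw [Finset.disjoint_insert_left]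
        exact ⟨hfn j, hl ▸ hdisj l j hlj⟩
      · rw [if_neg hl, if_pos hj]
        rw [Finset.disjoint_insert_right]
        exact ⟨hfn l, hj ▸ hdisj l j hlj⟩
      · rw [if_neg hl, if_neg hj]
        exact hdisj l j hlj

theorem stmt16 (n s : ℕ) (p : Fin (s + 1) → ℝ) (hp : ∀ i, 0 < p i)
    (hpsum : ∑ i, p i ≤ 1 / 2)
    (Q : Fin (s + 1) → Finset (Finset ℕ))
    (hQsub : ∀ i, ∀ A ∈ Q i, A ⊆ Finset.range n)
    (hup : ∀ i, ∀ A ∈ Q i, ∀ B : Finset ℕ, A ⊆ B → B ⊆ Finset.range n → B ∈ Q i)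
    (hmu : ∀ i, 3 * ((s : ℝ) + 1) * p i ≤
      ∑ A ∈ Q i, p i ^ A.card * (1 - p i) ^ (n - A.card)) :
    ∃ f : Fin (s + 1) → Finset ℕ, (∀ i, f i ∈ Q i) ∧
      ∀ i j, i ≠ j → Disjoint (f i) (f j) := by
  have hmu' : ∀ i, 3 * ((s : ℝ) + 1) * p i ≤ mu (p i) n (Q i) := hmu
  apply main_lemma s p hp hpsum n Q hQsub hup
  intro j
  have hsumle : ∑ l ∈ univ.erase j, (1 - mu (p l) n (Q l)) ≤ (s : ℝ) := by
    have h1 : ∀ l ∈ univ.erase j, (1 - mu (p l) n (Q l)) ≤ 1 := by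
      intro l _
      have h := hmu' l
      have hp3 : (0:ℝ) < 3 * ((s : ℝ) + 1) * p l := by
        have hpl := hp l
        have hs : (0:ℝ) ≤ (s:ℝ) := Nat.cast_nonneg s
        nlinarith
      linarith
    calc ∑ l ∈ univ.erase j, (1 - mu (p l) n (Q l)) ≤ (univ.erase j).card • (1:ℝ) :=
          Finset.sum_le_card_nsmul _ _ 1 h1
      _ = (s : ℝ) := by
          rw [Finset.card_erase_of_mem (Finset.mem_univ j)]
          simp
  have h2 : p j * (1 + 2 * ∑ l ∈ univ.erase j, (1 - mu (p l) n (Q l)))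
      ≤ p j * (1 + 2 * (s:ℝ)) := by
    apply mul_le_mul_of_nonneg_left _ (hp j).le
    linarith
  have h3 : p j * (1 + 2 * (s:ℝ)) < 3 * ((s : ℝ) + 1) * p j := by
    nlinarith [hp j, Nat.cast_nonneg (α := ℝ) s]
  linarith [hmu' j]
end
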